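/- Let a,b,c,m₀,m₁ ∈ ℝ and for p = (p₀,p₁,p₂) ∈ ℝ³ define the 4×4 complex matrix 𝒟̂(ip) with rows: (m₀, a i p₀, a i p₁, a i p₂), (b i p₀, m₁, −c i p₂, c i p₁), (b i p₁, c i p₂, m₁, −c i p₀), (b i p₂, −c i p₁, c i p₀, m₁). Then det 𝒟̂(ip) = (−c² p² + m₁²)(a b p² + m₀ m₁), where p² = p₀² + p₁² + p₂². -/

import Mathlib

open Matrix Complex

theorem stmt13 (a b c m₀ m₁ : ℝ) (p : Fin 3 → ℝ) :
    (!![(m₀ : ℂ), a * I * p 0, a * I * p 1, a * I * p 2;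
        b * I * p 0, (m₁ : ℂ), -(c * I * p 2), c * I * p 1;
        b * I * p 1, c * I * p 2, (m₁ : ℂ), -(c * I * p 0);
        b * I * p 2, -(c * I * p 1), c * I * p 0, (m₁ : ℂ)]).det
    = (-(c : ℂ) ^ 2 * ((p 0 ^ 2 + p 1 ^ 2 + p 2 ^ 2 : ℝ) : ℂ) + (m₁ : ℂ) ^ 2) *
        ((a : ℂ) * (b : ℂ) * ((p 0 ^ 2 + p 1 ^ 2 + p 2 ^ 2 : ℝ) : ℂ) + (m₀ : ℂ) * (m₁ : ℂ)) := by
  simp [Matrix.det_succ_row_zero, Fin.sum_univ_succ,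
    show (Fin.succAbove 1 2 : Fin 4) = 3 from rfl,
    show (Fin.succAbove 2 2 : Fin 4) = 3 from rfl,
    show (Fin.succAbove 3 2 : Fin 4) = 2 from rfl,
    show (Fin.castSucc 2 : Fin 4) = 2 from rfl]
  ring_nf
  simp [Complex.I_sq]
  ring
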